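/- If a connected graph H contains the star K_{1,4} as a subgraph but contains no path on 15 vertices as a subgraph, then H contains a vertex of degree greater than (v(H)/2)^(1/7), where v(H) is the number of vertices of H. -/

import Mathlib

/-- `G` contains a (not necessarily induced) subgraph isomorphic to `F`. -/
def Contains {α β : Type*} (F : SimpleGraph α) (G : SimpleGraph β) : Prop :=
  ∃ f : F →g G, Function.Injective f

/-- The star graph `K_{1,s}`: vertex `0` is the center, adjacent to the `s` leaves. -/
def starGraph (s : ℕ) : SimpleGraph (Fin (s + 1)) :=
  SimpleGraph.fromRel (fun a _ => a = 0)

namespace ExistsLargeDegreeAux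

open SimpleGraph Walk Finset

variable {V : Type} {H : SimpleGraph V}

lemma getVert_mem_support (p : H.Walk u v) (i : ℕ) :
    p.getVert i ∈ p.support := by
  induction p generalizing i with
  | nil => simp [Walk.getVert]
  | cons h q ih =>
    cases i with
    | zero => simp [Walk.getVert]
    | succ n => simp only [Walk.getVert_cons_succ, Walk.support_cons, List.mem_cons]; right; exact ih n

lemma getVert_injOn {p : H.Walk u v} (hp : p.IsPath) :
    ∀ i ≤ p.length, ∀ j ≤ p.length, p.getVert i = p.getVert j → i = j := by
  induction p with
  | nil => simp
  | cons h q ih =>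
    intro i hi j hj hij
    rw [Walk.isPath_def, Walk.support_cons, List.nodup_cons] at hp
    obtain ⟨hu, hnd⟩ := hp
    cases i with
    | zero =>
      cases j with
      | zero => rfl
      | succ m =>
        exfalso
        rw [Walk.getVert_zero, Walk.getVert_cons_succ] at hij
        exact hu (hij ▸ getVert_mem_support q m)
    | succ n =>
      cases j with
      | zero =>
        exfalso
        rw [Walk.getVert_zero, Walk.getVert_cons_succ] at hij
        exact hu (hij ▸ getVert_mem_support q n)
      | succ m =>
        rw [Walk.getVert_cons_succ, Walk.getVert_cons_succ] at hij
        have := ih ((Walk.isPath_def q).mpr hnd) n (Nat.succ_le_succ_iff.mp hi) m (Nat.succ_le_succ_iff.mp hj) hij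
        omega

lemma dist_getVert_le (hc : H.Connected) (p : H.Walk u v) (i t : ℕ) :
    H.dist (p.getVert i) (p.getVert (i + t)) ≤ t := by
  induction t with
  | zero => simp
  | succ n ih =>
    have h1 : H.dist (p.getVert (i + n)) (p.getVert (i + n + 1)) ≤ 1 := by
      by_cases hlt : i + n < p.length
      · exact (SimpleGraph.dist_le ((p.adj_getVert_succ hlt).toWalk)).trans (by simp)
      · rw [p.getVert_of_length_le (by omega), p.getVert_of_length_le (by omega)]
        simp [SimpleGraph.dist_self]
    calc H.dist (p.getVert i) (p.getVert (i + (n+1)))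
        ≤ H.dist (p.getVert i) (p.getVert (i + n)) + H.dist (p.getVert (i+n)) (p.getVert (i + n + 1)) :=
          hc.dist_triangle
      _ ≤ n + 1 := by omega

lemma isPath_append_of_inter {p : H.Walk u v} {q : H.Walk v w}
    (hp : p.IsPath) (hq : q.IsPath)
    (h : ∀ x, x ∈ p.support → x ∈ q.support → x = v) : (p.append q).IsPath := by
  rw [Walk.isPath_def, Walk.support_append]
  apply List.Nodup.append hp.support_nodup (hq.support_nodup.tail)
  intro x hxp hxq
  have hxq' : x ∈ q.support := List.mem_of_mem_tail hxq
  have hxv := h x hxp hxq'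
  have hcons : q.support = v :: q.support.tail := by
    rw [Walk.support_eq_cons]; rfl
  have hnd := hq.support_nodup
  rw [hcons, List.nodup_cons] at hnd
  exact hnd.1 (hxv ▸ hxq)

lemma exists_deg4 [Fintype V] [DecidableRel H.Adj] (hstar : Contains (_root_.starGraph 4) H) :
    ∃ v : V, 4 ≤ H.degree v := by
  classical
  obtain ⟨f, hf⟩ := hstar
  refine ⟨f 0, ?_⟩
  have hadj : ∀ i : Fin 5, i ≠ 0 → H.Adj (f 0) (f i) := by
    intro i hi
    apply f.map_adj
    simp only [_root_.starGraph, SimpleGraph.fromRel_adj]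
    exact ⟨fun h => hi h.symm, Or.inl trivial⟩
  have hsub : (Finset.univ.erase (0 : Fin 5)).image f ⊆ H.neighborFinset (f 0) := by
    intro x hx
    simp only [Finset.mem_image, Finset.mem_erase] at hx
    obtain ⟨i, ⟨hi, _⟩, rfl⟩ := hx
    simpa using hadj i hi
  calc 4 = ((Finset.univ.erase (0 : Fin 5)).image f).card := by
            rw [Finset.card_image_of_injective _ hf]; simp
    _ ≤ (H.neighborFinset (f 0)).card := Finset.card_le_card hsub
    _ = H.degree (f 0) := rfl

lemma path_length_le (hpath : ¬ Contains (SimpleGraph.pathGraph 15) H) :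
    ∀ (u v : V) (p : H.Walk u v), p.IsPath → p.length ≤ 13 := by
  intro u v p hp
  by_contra hlen
  push_neg at hlen
  apply hpath
  refine ⟨⟨fun i => p.getVert i, ?_⟩, ?_⟩
  · intro a b hab
    rw [SimpleGraph.pathGraph_adj] at hab
    have ha := a.isLt
    have hb := b.isLt
    rcases hab with h | h
    · have := p.adj_getVert_succ (by omega : (a:ℕ) < p.length)
      rwa [show (a:ℕ) + 1 = (b:ℕ) from h] at this
    · have := p.adj_getVert_succ (by omega : (b:ℕ) < p.length)
      rw [show (b:ℕ) + 1 = (a:ℕ) from h] at this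
      exact this.symm
  · intro a b hab
    have ha := a.isLt
    have hb := b.isLt
    have := getVert_injOn hp a (by omega) b (by omega) hab
    exact Fin.ext this

lemma ecc_le_seven (hconn : H.Connected) {k : ℕ}
    (hmax : ∀ (a b : V) (q : H.Walk a b), q.IsPath → q.length ≤ k)
    {a b : V} (p : H.Walk a b) (hp : p.IsPath) (hlen : p.length = k) (hk : k ≤ 13) :
    ∀ u : V, H.dist (p.getVert 6) u ≤ 7 := by
  classical
  intro u
  have hsupne : p.support.toFinset.Nonempty := ⟨a, by simp⟩
  obtain ⟨x, hxmem, hxmin⟩ := Finset.exists_min_image p.support.toFinset (fun y => H.dist u y) hsupne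
  rw [List.mem_toFinset] at hxmem
  set i := (p.takeUntil x hxmem).length with hidef
  have hi : i ≤ p.length := p.length_takeUntil_le hxmem
  have hspec := p.take_spec hxmem
  have hgx : p.getVert i = x := by
    conv_lhs => rw [← hspec]
    rw [Walk.getVert_append]
    simp [hidef]
  have hlensum : i + (p.dropUntil x hxmem).length = k := by
    have := congrArg Walk.length hspec
    rw [Walk.length_append] at this
    omega
  obtain ⟨q0, hq0⟩ := (hconn u x).exists_walk_length_eq_dist
  set q := q0.bypass with hqdef
  have hqpath : q.IsPath := q0.bypass_isPath
  have hqlen : q.length = H.dist u x := by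
    have h1 : q.length ≤ H.dist u x := hq0 ▸ q0.length_bypass_le
    have h2 := SimpleGraph.dist_le q
    omega
  have hinter : ∀ y, y ∈ q.support → y ∈ p.support → y = x := by
    intro y hyq hyp
    have h1 : H.dist u y ≤ (q.takeUntil y hyq).length := SimpleGraph.dist_le _
    have h2 : H.dist y x ≤ (q.dropUntil y hyq).length := SimpleGraph.dist_le _
    have h3 : (q.takeUntil y hyq).length + (q.dropUntil y hyq).length = q.length := by
      have := congrArg Walk.length (q.take_spec hyq)
      rw [Walk.length_append] at this
      omega
    have h4 : H.dist u x ≤ H.dist u y := hxmin y (List.mem_toFinset.mpr hyp)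
    have h5 : H.dist y x = 0 := by omega
    exact (hconn.dist_eq_zero_iff).mp h5
  have hP2 : (q.append (p.dropUntil x hxmem)).IsPath := by
    apply isPath_append_of_inter hqpath (hp.dropUntil hxmem)
    intro y hyq hyd
    exact hinter y hyq (p.support_dropUntil_subset hxmem hyd)
  have hB1 : H.dist u x + (p.dropUntil x hxmem).length ≤ k := by
    have := hmax _ _ _ hP2
    rw [Walk.length_append, hqlen] at this
    exact this
  have hP1 : (q.append (p.takeUntil x hxmem).reverse).IsPath := by
    apply isPath_append_of_inter hqpath ((hp.takeUntil hxmem).reverse)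
    intro y hyq hyd
    rw [Walk.support_reverse, List.mem_reverse] at hyd
    exact hinter y hyq (p.support_takeUntil_subset hxmem hyd)
  have hB2 : H.dist u x + i ≤ k := by
    have := hmax _ _ _ hP1
    rw [Walk.length_append, hqlen, Walk.length_reverse] at this
    exact this
  have hcx : H.dist (p.getVert 6) x ≤ max i 6 - min i 6 := by
    rcases le_or_gt i 6 with h | h
    · have := dist_getVert_le hconn p i (6 - i)
      rw [show i + (6 - i) = 6 by omega, hgx] at this
      rw [SimpleGraph.dist_comm]
      simpa [Nat.max_eq_right h, Nat.min_eq_left h] using this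
    · have := dist_getVert_le hconn p 6 (i - 6)
      rw [show 6 + (i - 6) = i by omega, hgx] at this
      simpa [Nat.max_eq_left h.le, Nat.min_eq_right h.le] using this
  have htri : H.dist (p.getVert 6) u ≤ H.dist (p.getVert 6) x + H.dist x u := hconn.dist_triangle
  have hxu : H.dist x u = H.dist u x := SimpleGraph.dist_comm
  rcases le_or_gt i 6 with h | h
  · have : H.dist u x ≤ i := by omega
    omega
  · have h6 : H.dist u x ≤ k - i := by omega
    have h7 : max i 6 - min i 6 = i - 6 := by omega
    omega

lemma card_le_sum_pow [Fintype V] [DecidableRel H.Adj] (hconn : H.Connected) {m : V}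
    (hecc : ∀ u : V, H.dist m u ≤ 7) {Δ : ℕ} (hΔ : ∀ v : V, H.degree v ≤ Δ) :
    Fintype.card V ≤ ∑ d ∈ Finset.range 8, Δ ^ d := by
  classical
  set sph : ℕ → Finset V := fun d => Finset.univ.filter (fun u => H.dist m u = d) with hsph
  have hs0 : (sph 0).card ≤ 1 := by
    have : sph 0 ⊆ {m} := by
      intro u hu
      simp only [hsph, Finset.mem_filter] at hu
      simp [(hconn.dist_eq_zero_iff.mp hu.2).symm]
    simpa using Finset.card_le_card this
  have hstep : ∀ d, (sph (d+1)).card ≤ (sph d).card * Δ := by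
    intro d
    have hsub : sph (d+1) ⊆ (sph d).biUnion (fun w => H.neighborFinset w) := by
      intro u hu
      simp only [hsph, Finset.mem_filter] at hu
      obtain ⟨-, hd⟩ := hu
      obtain ⟨p, hplen⟩ := (hconn m u).exists_walk_length_eq_dist
      rw [hd] at hplen
      set w := p.getVert d with hw
      have hadj : H.Adj w u := by
        have := p.adj_getVert_succ (by omega : d < p.length)
        rwa [show d + 1 = p.length by omega, p.getVert_length] at this
      have hdw : H.dist m w = d := by
        have h1 : H.dist m w ≤ d := by
          have := dist_getVert_le hconn p 0 d
          rwa [p.getVert_zero, Nat.zero_add] at this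
        have h2 : H.dist m u ≤ H.dist m w + H.dist w u := hconn.dist_triangle
        have h3 : H.dist w u ≤ 1 := (SimpleGraph.dist_le hadj.toWalk).trans (by simp)
        omega
      apply Finset.mem_biUnion.mpr
      exact ⟨w, by simp [hsph, hdw], by simpa [SimpleGraph.mem_neighborFinset] using hadj⟩
    calc (sph (d+1)).card ≤ ((sph d).biUnion (fun w => H.neighborFinset w)).card :=
          Finset.card_le_card hsub
      _ ≤ (sph d).card * Δ := Finset.card_biUnion_le_card_mul _ _ _ (fun a _ => hΔ a)
  have hind : ∀ d, (sph d).card ≤ Δ ^ d := by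
    intro d
    induction d with
    | zero => simpa using hs0
    | succ n ih =>
      calc (sph (n+1)).card ≤ (sph n).card * Δ := hstep n
        _ ≤ Δ ^ n * Δ := Nat.mul_le_mul_right _ ih
        _ = Δ ^ (n+1) := (pow_succ Δ n).symm
  have hcover : (Finset.univ : Finset V) ⊆ (Finset.range 8).biUnion sph := by
    intro u _
    apply Finset.mem_biUnion.mpr
    exact ⟨H.dist m u, Finset.mem_range.mpr (by have := hecc u; omega), by simp [hsph]⟩
  calc Fintype.card V = (Finset.univ : Finset V).card := rfl
    _ ≤ ((Finset.range 8).biUnion sph).card := Finset.card_le_card hcover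
    _ ≤ ∑ d ∈ Finset.range 8, (sph d).card := Finset.card_biUnion_le
    _ ≤ ∑ d ∈ Finset.range 8, Δ ^ d := Finset.sum_le_sum (fun d _ => hind d)

lemma sum_pow_lt {Δ : ℕ} (hΔ : 2 ≤ Δ) : ∑ d ∈ Finset.range 8, Δ ^ d < 2 * Δ ^ 7 := by
  have key : ∀ t : ℕ, ∑ d ∈ Finset.range (t+1), Δ ^ d ≤ 2 * Δ ^ t - 1 := by
    intro t
    induction t with
    | zero => simp
    | succ n ih =>
      rw [Finset.sum_range_succ]
      have h1 : 1 ≤ Δ ^ n := Nat.one_le_pow _ _ (by omega)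
      have h2 : 2 * Δ ^ n ≤ Δ ^ (n+1) := by
        rw [pow_succ]
        calc 2 * Δ ^ n = Δ ^ n * 2 := by ring
          _ ≤ Δ ^ n * Δ := Nat.mul_le_mul_left _ hΔ
      omega
  have hk := key 7
  norm_num at hk
  have h1 : 1 ≤ Δ ^ 7 := Nat.one_le_pow _ _ (by omega)
  omega

end ExistsLargeDegreeAux

open ExistsLargeDegreeAux SimpleGraph in
/-- A connected graph containing `K_{1,4}` but no path on 15 vertices has a
vertex of degree greater than `(v(H)/2)^(1/7)`. -/
theorem exists_large_degree {V : Type} [Fintype V] (H : SimpleGraph V) [DecidableRel H.Adj]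
    (hconn : H.Connected)
    (hstar : Contains (_root_.starGraph 4) H)
    (hpath : ¬ Contains (SimpleGraph.pathGraph 15) H) :
    ∃ v : V, ((Fintype.card V : ℝ) / 2) ^ ((1 : ℝ) / 7) < (H.degree v : ℝ) := by
  classical
  have hne : Nonempty V := hconn.nonempty
  obtain ⟨v0⟩ := hne
  -- the maximal length of a path
  set P : ℕ → Prop := fun k => ∃ (a b : V) (p : H.Walk a b), p.IsPath ∧ p.length = k with hP
  have hP0 : P 0 := ⟨v0, v0, Walk.nil, by simp, rfl⟩
  set n := Fintype.card V with hn
  set k := Nat.findGreatest P n with hk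
  have hPk : P k := Nat.findGreatest_spec (Nat.zero_le n) hP0
  have hmax : ∀ (a b : V) (q : H.Walk a b), q.IsPath → q.length ≤ k := by
    intro a b q hq
    by_contra hgt
    push_neg at hgt
    exact Nat.findGreatest_is_greatest hgt (le_of_lt hq.length_lt)
      ⟨a, b, q, hq, rfl⟩
  obtain ⟨a, b, p, hp, hplen⟩ := hPk
  have hk13 : k ≤ 13 := hplen ▸ path_length_le hpath a b p hp
  have hecc : ∀ u : V, H.dist (p.getVert 6) u ≤ 7 :=
    ecc_le_seven hconn hmax p hp hplen hk13
  -- the max degree vertex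
  obtain ⟨w, -, hw⟩ := Finset.exists_max_image (Finset.univ : Finset V) (fun v => H.degree v : V → ℕ) ⟨v0, Finset.mem_univ v0⟩
  refine ⟨w, ?_⟩
  set Δ := H.degree w with hΔdef
  have hΔ4 : 4 ≤ Δ := by
    obtain ⟨v, hv⟩ := exists_deg4 hstar
    exact le_trans hv (hw v (Finset.mem_univ v))
  have hcard : n < 2 * Δ ^ 7 :=
    lt_of_le_of_lt (card_le_sum_pow hconn hecc (fun v => hw v (Finset.mem_univ v)))
      (sum_pow_lt (by omega))
  -- real arithmetic
  have hr : ((n : ℝ) / 2) < (Δ : ℝ) ^ (7 : ℕ) := by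
    rw [div_lt_iff₀ (by norm_num : (0:ℝ) < 2)]
    calc (n : ℝ) < (2 * Δ ^ 7 : ℕ) := by exact_mod_cast hcard
      _ = (Δ : ℝ) ^ (7:ℕ) * 2 := by push_cast; ring
  have hlt : ((n : ℝ) / 2) ^ ((1:ℝ)/7) < ((Δ : ℝ) ^ (7:ℕ)) ^ ((1:ℝ)/7) :=
    Real.rpow_lt_rpow (by positivity) hr (by norm_num)
  have heq : ((Δ : ℝ) ^ (7:ℕ)) ^ ((1:ℝ)/7) = (Δ : ℝ) := by
    rw [← Real.rpow_natCast (Δ : ℝ) 7, ← Real.rpow_mul (Nat.cast_nonneg Δ)]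
    norm_num
  rw [heq] at hlt
  exact hlt
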